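/- Suppose T is in case 1 (k < 0 and M < m) and let I_h(t) = a·e^{kt} + (b_m + b_M)/2. Then the max-norm error of I_h is attained at the indices M and m with opposite signs: ‖T − I_h(𝔱)‖_∞ = T_M − I_h(t_M) = −(T_m − I_h(t_m)) = (b_M − b_m)/2. -/
import Mathlib


/-- In case 1 (`k < 0` and `M < m`), the max-norm error of
`I_h(t) = a·e^{kt} + (b_m + b_M)/2` is attained at the indices `M` and `m` with
opposite signs:
`‖T − I_h(𝔱)‖_∞ = T_M − I_h(t_M) = −(T_m − I_h(t_m)) = (b_M − b_m)/2`.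
The norm on `Fin n → ℝ` is the sup-norm. -/
theorem case1_error_attained_at_m_M {n : ℕ}
    (t : Fin n → ℝ) (ht : StrictMono t) (T : Fin n → ℝ)
    (k : ℝ) (hk : k < 0)
    (m M : Fin n)
    (hm_min : ∀ i, T m ≤ T i) (hm_first : ∀ i, T i = T m → m ≤ i)
    (hM_max : ∀ i, T i ≤ T M) (hM_last : ∀ i, T i = T M → i ≤ M)
    (hMm : M < m)
    (a : ℝ)
    (ha_mem :
      (∃ i, i < m ∧ a = (T i - T m) / (Real.exp (k * t i) - Real.exp (k * t m))) ∨
      (∃ j, M < j ∧ a = (T j - T M) / (Real.exp (k * t j) - Real.exp (k * t M))))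
    (ha_min :
      (∀ i, i < m → a ≤ (T i - T m) / (Real.exp (k * t i) - Real.exp (k * t m))) ∧
      (∀ j, M < j → a ≤ (T j - T M) / (Real.exp (k * t j) - Real.exp (k * t M))))
    (bm bM : ℝ)
    (hbm : bm = T m - a * Real.exp (k * t m))
    (hbM : bM = T M - a * Real.exp (k * t M)) :
    ‖T - (fun i => a * Real.exp (k * t i) + (bm + bM) / 2)‖ =
      T M - (a * Real.exp (k * t M) + (bm + bM) / 2) ∧
    T M - (a * Real.exp (k * t M) + (bm + bM) / 2) =
      -(T m - (a * Real.exp (k * t m) + (bm + bM) / 2)) ∧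
    -(T m - (a * Real.exp (k * t m) + (bm + bM) / 2)) = (bM - bm) / 2 := by
  subst hbm; subst hbM
  have hE : ∀ i j : Fin n, i < j → Real.exp (k * t j) < Real.exp (k * t i) := by
    intro i j hij
    exact Real.exp_lt_exp.mpr (by nlinarith [ht hij])
  have ha0 : 0 ≤ a := by
    rcases ha_mem with ⟨i, him, rfl⟩ | ⟨j, hjM, rfl⟩
    · have hd : 0 < Real.exp (k * t i) - Real.exp (k * t m) := sub_pos.mpr (hE i m him)
      exact div_nonneg (sub_nonneg.mpr (hm_min i)) hd.le
    · have hd : Real.exp (k * t j) - Real.exp (k * t M) < 0 := sub_neg.mpr (hE M j hjM)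
      rw [div_nonneg_iff]; exact Or.inr ⟨sub_nonpos.mpr (hM_max j), hd.le⟩
  have hub : ∀ i, T i - a * Real.exp (k * t i) ≤ T M - a * Real.exp (k * t M) := by
    intro i
    rcases lt_trichotomy i M with h | h | h
    · have hEi := hE i M h
      have h1 := hM_max i
      nlinarith
    · subst h; exact le_refl _
    · have hd : Real.exp (k * t i) - Real.exp (k * t M) < 0 := sub_neg.mpr (hE M i h)
      have h2 := (le_div_iff_of_neg hd).mp (ha_min.2 i h)
      nlinarith
  have hlb : ∀ i, T m - a * Real.exp (k * t m) ≤ T i - a * Real.exp (k * t i) := by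
    intro i
    rcases lt_trichotomy i m with h | h | h
    · have hd : 0 < Real.exp (k * t i) - Real.exp (k * t m) := sub_pos.mpr (hE i m h)
      have h2 := (le_div_iff₀ hd).mp (ha_min.1 i h)
      nlinarith
    · subst h; exact le_refl _
    · have hEi := hE m i h
      have h1 := hm_min i
      nlinarith
  have hmm : T m - a * Real.exp (k * t m) ≤ T M - a * Real.exp (k * t M) := hub m
  set bm := T m - a * Real.exp (k * t m) with hbm'
  set bM := T M - a * Real.exp (k * t M) with hbM'
  have key : ‖T - (fun i => a * Real.exp (k * t i) + (bm + bM) / 2)‖ = (bM - bm) / 2 := by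
    apply le_antisymm
    · rw [pi_norm_le_iff_of_nonneg (by linarith)]
      intro i
      have h1 := hub i
      have h2 := hlb i
      rw [Pi.sub_apply, Real.norm_eq_abs, abs_le]
      constructor <;> simp only [hbm', hbM'] at * <;> [linarith; linarith]
    · have h := norm_le_pi_norm (T - (fun i => a * Real.exp (k * t i) + (bm + bM) / 2)) M
      rw [Pi.sub_apply, Real.norm_eq_abs] at h
      have : |T M - (a * Real.exp (k * t M) + (bm + bM) / 2)| = (bM - bm) / 2 := by
        rw [abs_of_nonneg (by simp only [hbm', hbM'] at *; linarith)]
        simp only [hbm', hbM']; ring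
      linarith [this ▸ h]
  refine ⟨?_, by simp only [hbm', hbM']; ring, by simp only [hbm', hbM']; ring⟩
  rw [key]; simp only [hbm', hbM']; ring
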